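/- If the induced representation (S_a, M; α, β) given by m ∗ s = m·(αsβ) is faithful, then the original representation (S, M) is faithful. -/

import Mathlib

/-- Any product `x * ↑s * y` in `S¹ = WithOne S` with middle factor in `S` lies in `S`. -/
theorem exists_coe_eq {S : Type*} [Semigroup S] (x y : WithOne S) (s : S) :
    ∃ z : S, (z : WithOne S) = x * ↑s * y := by
  induction x using WithOne.recOneCoe with
  | one => induction y using WithOne.recOneCoe with
    | one => exact ⟨s, by simp⟩
    | coe b => exact ⟨s * b, by simp⟩
  | coe a => induction y using WithOne.recOneCoe with
    | one => exact ⟨a * s, by simp⟩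
    | coe b => exact ⟨a * s * b, by simp [mul_assoc]⟩

/-- The element `x s y ∈ S` for `x, y ∈ S¹`, `s ∈ S`. -/
noncomputable def sand3 {S : Type*} [Semigroup S] (x : WithOne S) (s : S) (y : WithOne S) : S :=
  (exists_coe_eq x y s).choose

theorem sand3_spec {S : Type*} [Semigroup S] (x : WithOne S) (s : S) (y : WithOne S) :
    (↑(sand3 x s y) : WithOne S) = x * ↑s * y :=
  (exists_coe_eq x y s).choose_spec

/-- `sand b c s = b s c ∈ S` for `b, c ∈ S¹`, `s ∈ S`. -/
noncomputable def sand {S : Type*} [Semigroup S] (b c : WithOne S) (s : S) : S := sand3 b s c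

theorem sand_eq_of_coe {S : Type*} [Semigroup S] (b c : WithOne S) (s u : S)
    (h : (↑u : WithOne S) = b * ↑s * c) : sand b c s = u :=
  WithOne.coe_inj.mp ((sand3_spec b s c).trans h.symm)

theorem act_sand {S M : Type*} [Semigroup S]
    (act : M → S → M) (hact : ∀ (m : M) (s t : S), act m (s * t) = act (act m s) t)
    (α β : WithOne S) (s t : S) (h : ∀ m : M, act m s = act m t) :
    ∀ m : M, act m (sand α β s) = act m (sand α β t) := by
  intro m
  induction α using WithOne.recOneCoe with
  | one =>
    induction β using WithOne.recOneCoe with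
    | one =>
      rw [sand_eq_of_coe 1 1 s s (by simp), sand_eq_of_coe 1 1 t t (by simp)]
      exact h m
    | coe b =>
      rw [sand_eq_of_coe 1 b s (s * b) (by simp), sand_eq_of_coe 1 b t (t * b) (by simp),
        hact, hact, h]
  | coe a =>
    induction β using WithOne.recOneCoe with
    | one =>
      rw [sand_eq_of_coe a 1 s (a * s) (by simp), sand_eq_of_coe a 1 t (a * t) (by simp),
        hact, hact, h]
    | coe b =>
      rw [sand_eq_of_coe a b s (a * s * b) (by simp [mul_assoc]),
        sand_eq_of_coe a b t (a * t * b) (by simp [mul_assoc]),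
        hact, hact, hact, hact, h]

/-- If the induced representation `(S_a, M; α, β)`, `m ∗ s = m · (α s β)`, is faithful,
then so is the original representation `(S, M)`. -/
theorem faithful_of_induced_faithful {S M : Type*} [Semigroup S]
    (act : M → S → M) (hact : ∀ (m : M) (s t : S), act m (s * t) = act (act m s) t)
    (a : S) (α β : WithOne S) (hβα : β * α = (a : WithOne S))
    (hfaith : ∀ s t : S, (∀ m : M, act m (sand α β s) = act m (sand α β t)) → s = t) :
    ∀ s t : S, (∀ m : M, act m s = act m t) → s = t := by
  intro s t h
  exact hfaith s t (act_sand act hact α β s t h)
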